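/- Let n ≥ 1 and let a₁, …, a_n ∈ ℂ be such that Σ_{i∈T} a_i ≠ 0 for every nonempty subset T ⊆ {1, …, n}, and let A ⊆ ℂ[z₁, …, z_n] be the ℂ-subalgebra generated by p_m = a₁ z₁^m + … + a_n z_n^m for all m ≥ 1. Then every ℂ-subalgebra B with A ⊆ B ⊆ ℂ[z₁, …, z_n] is a finitely generated ℂ-algebra and an integral domain; in particular A itself is a finitely generated ℂ-algebra and an integral domain. -/

import Mathlib

open scoped BigOperators

open Finset Matrix

lemma aux_zero_of_sums (n : ℕ) (a x : Fin n → ℂ)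
    (ha : ∀ T : Finset (Fin n), T.Nonempty → ∑ i ∈ T, a i ≠ 0)
    (h : ∀ m : ℕ, 1 ≤ m → m ≤ n → ∑ i, a i * x i ^ m = 0) : x = 0 := by
  classical
  by_contra hx
  set V : Finset ℂ := (Finset.univ.image x).erase 0 with hV
  set k := V.card with hk
  have hkn : k ≤ n := by
    calc k ≤ (Finset.univ.image x).card := Finset.card_le_card (Finset.erase_subset _ _)
    _ ≤ (Finset.univ : Finset (Fin n)).card := Finset.card_image_le
    _ = n := by simp
  set e : Fin k ≃ {v // v ∈ V} := V.equivFin.symm with he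
  set w : Fin k → ℂ := fun l => (e l : ℂ) with hw
  have hwV : ∀ l, w l ∈ V := fun l => (e l).2
  have hw0 : ∀ l, w l ≠ 0 := fun l => Finset.ne_of_mem_erase (hwV l)
  have hwinj : Function.Injective w := by
    intro l l' hll
    exact e.injective (Subtype.ext hll)
  set c : ℂ → ℂ := fun v => ∑ i ∈ Finset.univ.filter (fun i => x i = v), a i with hc
  -- key linear relations
  have key : ∀ m : ℕ, 1 ≤ m → m ≤ n → ∑ l : Fin k, c (w l) * w l ^ m = 0 := by
    intro m hm1 hmn
    have h1 : ∑ v ∈ Finset.univ.image x, c v * v ^ m = ∑ i, a i * x i ^ m := by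
      rw [← Finset.sum_fiberwise_of_maps_to (fun i _ => Finset.mem_image_of_mem x (Finset.mem_univ i))
        (fun i => a i * x i ^ m)]
      refine Finset.sum_congr rfl fun v _ => ?_
      rw [hc]
      rw [Finset.sum_mul]
      refine Finset.sum_congr rfl fun i hi => ?_
      rw [Finset.mem_filter] at hi
      rw [hi.2]
    have h2 : ∑ v ∈ V, c v * v ^ m = ∑ v ∈ Finset.univ.image x, c v * v ^ m := by
      refine Finset.sum_erase _ ?_
      rw [zero_pow (by omega), mul_zero]
    have h3 : ∑ l : Fin k, c (w l) * w l ^ m = ∑ v ∈ V, c v * v ^ m := by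
      rw [← Finset.sum_attach V (fun v => c v * v ^ m)]
      exact (Equiv.sum_comp e (fun v => c (v : ℂ) * (v : ℂ) ^ m))
    rw [h3, h2, h1]; exact h m hm1 hmn
  -- vandermonde matrix
  set M : Matrix (Fin k) (Fin k) ℂ := fun m l => w l ^ ((m : ℕ) + 1) with hM
  have hdet : M.det ≠ 0 := by
    have hMeq : M = (Matrix.vandermonde w)ᵀ * Matrix.diagonal w := by
      ext m l
      rw [Matrix.mul_diagonal]
      show w l ^ ((m : ℕ) + 1) = _
      simp [Matrix.vandermonde, pow_succ]
    rw [hMeq, Matrix.det_mul, Matrix.det_transpose, Matrix.det_vandermonde, Matrix.det_diagonal]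
    refine mul_ne_zero (Finset.prod_ne_zero_iff.2 fun i _ => Finset.prod_ne_zero_iff.2
      fun j hj => sub_ne_zero_of_ne fun hEq => ?_) (Finset.prod_ne_zero_iff.2 fun l _ => hw0 l)
    have := hwinj hEq.symm
    rw [this] at hj
    exact absurd (Finset.mem_Ioi.1 hj) (lt_irrefl _)
  have hmv : M.mulVec (fun l => c (w l)) = 0 := by
    funext m
    have := key ((m : ℕ) + 1) (by omega) (by have := m.2; omega)
    simpa [Matrix.mulVec, dotProduct, hM, mul_comm] using this
  have hc0 : (fun l => c (w l)) = 0 := Matrix.eq_zero_of_mulVec_eq_zero hdet hmv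
  -- contradiction
  have hxne : ∃ i, x i ≠ 0 := by
    by_contra hno
    push_neg at hno
    exact hx (funext hno)
  obtain ⟨i, hi⟩ := hxne
  have hvV : x i ∈ V := Finset.mem_erase.2 ⟨hi, Finset.mem_image_of_mem x (Finset.mem_univ i)⟩
  have : c (x i) = 0 := by
    have := congrFun hc0 (e.symm ⟨x i, hvV⟩)
    simpa [hw] using this
  refine ha (Finset.univ.filter (fun j => x j = x i)) ⟨i, by simp⟩ ?_ |>.elim
  exact this
open MvPolynomial

lemma aux_hc_mul {σ : Type*} (g Q : MvPolynomial σ ℂ) (m k : ℕ) (hQ : Q.IsHomogeneous m) :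
    homogeneousComponent (k + m) (g * Q) = homogeneousComponent k g * Q := by
  conv_lhs => rw [← sum_homogeneousComponent g]
  rw [Finset.sum_mul, map_sum]
  have hterm : ∀ j, homogeneousComponent (k + m) (homogeneousComponent j g * Q)
      = if k = j then homogeneousComponent j g * Q else 0 := by
    intro j
    have hmem : homogeneousComponent j g * Q ∈ homogeneousSubmodule σ ℂ (j + m) :=
      (mem_homogeneousSubmodule _ _).2 ((homogeneousComponent_isHomogeneous j g).mul hQ)
    rw [homogeneousComponent_of_mem hmem]
    congr 1
    simp [Nat.add_right_cancel_iff]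
  simp_rw [hterm]
  rw [Finset.sum_ite_eq]
  split_ifs with h
  · rfl
  · rw [homogeneousComponent_eq_zero, zero_mul]
    rw [Finset.mem_range, not_lt] at h
    omega



/-- let `a₁, …, a_n ∈ ℂ` be such that `Σ_{i ∈ T} a_i ≠ 0` for every
nonempty subset `T`, and let `A ⊆ ℂ[z₁, …, z_n]` be the subalgebra generated by the
deformed Newton sums `p_m = Σ_i a_i z_i^m`, `m ≥ 1`.  Then every intermediate
subalgebra `A ⊆ B ⊆ ℂ[z₁, …, z_n]` is a finitely generated `ℂ`-algebra and an
integral domain; in particular so is `A` itself (take `B = A`). -/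
theorem intermediate_algebra_finiteType_isDomain (n : ℕ) (hn : 1 ≤ n) (a : Fin n → ℂ)
    (ha : ∀ T : Finset (Fin n), T.Nonempty → ∑ i ∈ T, a i ≠ 0)
    (B : Subalgebra ℂ (MvPolynomial (Fin n) ℂ))
    (hB : Algebra.adjoin ℂ {p : MvPolynomial (Fin n) ℂ |
        ∃ m : ℕ, 1 ≤ m ∧ p = ∑ i, MvPolynomial.C (a i) * MvPolynomial.X i ^ m} ≤ B) :
    Algebra.FiniteType ℂ B ∧ IsDomain B := by
  classical
  set q : Fin n → MvPolynomial (Fin n) ℂ :=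
    fun j => ∑ i, MvPolynomial.C (a i) * MvPolynomial.X i ^ ((j : ℕ) + 1) with hq
  have hqB : ∀ j, q j ∈ B := fun j =>
    hB (Algebra.subset_adjoin ⟨(j : ℕ) + 1, by omega, rfl⟩)
  have hqhom : ∀ j, (q j).IsHomogeneous ((j : ℕ) + 1) := by
    intro j
    exact MvPolynomial.IsHomogeneous.sum _ _ _
      (fun i _ => MvPolynomial.isHomogeneous_C_mul_X_pow _ _ _)
  set I := Ideal.span (Set.range q) with hI
  -- zero locus of I is {0}
  have hzero : ∀ x ∈ MvPolynomial.zeroLocus ℂ I, x = 0 := by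
    intro x hx
    refine aux_zero_of_sums n a x ha fun m hm1 hmn => ?_
    have hmem : q ⟨m - 1, by omega⟩ ∈ I := Ideal.subset_span ⟨_, rfl⟩
    have := (MvPolynomial.mem_zeroLocus_iff.1 hx) _ hmem
    have hm' : m - 1 + 1 = m := by omega
    simpa [hq, hm', map_sum] using this
  -- each X i is in the radical of I
  have hrad : ∀ i : Fin n, ∃ N : ℕ, MvPolynomial.X i ^ N ∈ I := by
    intro i
    have : MvPolynomial.X i ∈ I.radical := by
      rw [← MvPolynomial.vanishingIdeal_zeroLocus_eq_radical (K := ℂ)]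
      refine MvPolynomial.mem_vanishingIdeal_iff.2 fun x hx => ?_
      rw [hzero x hx]
      simp
    exact this
  choose N₀ hN₀ using hrad
  set N : ℕ := n + Finset.univ.sup N₀ with hN
  have hnN : n ≤ N := by simp [hN]
  have hN1 : 1 ≤ N := le_trans hn hnN
  have hXNI : ∀ i : Fin n, MvPolynomial.X i ^ N ∈ I := by
    intro i
    have hle : N₀ i ≤ N := by
      have := Finset.le_sup (Finset.mem_univ i) (f := N₀)
      omega
    have : (MvPolynomial.X i ^ N : MvPolynomial (Fin n) ℂ)
        = MvPolynomial.X i ^ (N - N₀ i) * MvPolynomial.X i ^ (N₀ i) := by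
      rw [← pow_add]; congr 1; omega
    rw [this]
    exact Ideal.mul_mem_left _ _ (hN₀ i)
  -- bounded-degree representation of X i ^ N
  have hrep : ∀ i : Fin n, ∃ g : Fin n → MvPolynomial (Fin n) ℂ,
      (∀ j, (g j).totalDegree ≤ N - ((j : ℕ) + 1)) ∧
      MvPolynomial.X i ^ N = ∑ j, g j * q j := by
    intro i
    obtain ⟨g₀, hg₀⟩ := Ideal.mem_span_range_iff_exists_fun.1 (hXNI i)
    refine ⟨fun j => homogeneousComponent (N - ((j : ℕ) + 1)) (g₀ j),
      fun j => (homogeneousComponent_isHomogeneous _ _).totalDegree_le, ?_⟩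
    have hXh : (MvPolynomial.X (R := ℂ) i ^ N) ∈ homogeneousSubmodule (Fin n) ℂ N :=
      (mem_homogeneousSubmodule _ _).2 (MvPolynomial.isHomogeneous_X_pow i N)
    have hXc : homogeneousComponent N (MvPolynomial.X (R := ℂ) i ^ N)
        = MvPolynomial.X i ^ N := by
      rw [homogeneousComponent_of_mem hXh]; simp
    calc (MvPolynomial.X i ^ N : MvPolynomial (Fin n) ℂ)
        = homogeneousComponent N (MvPolynomial.X i ^ N) := hXc.symm
      _ = homogeneousComponent N (∑ j : Fin n, g₀ j * q j) := by rw [hg₀]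
      _ = ∑ j : Fin n, homogeneousComponent N (g₀ j * q j) := map_sum _ _ _
      _ = ∑ j : Fin n, homogeneousComponent (N - ((j : ℕ) + 1)) (g₀ j) * q j := by
          refine Finset.sum_congr rfl fun j _ => ?_
          have hj : N - ((j : ℕ) + 1) + ((j : ℕ) + 1) = N := by
            have : (j : ℕ) + 1 ≤ n := j.2
            omega
          have h2 := aux_hc_mul (g₀ j) (q j) ((j : ℕ) + 1) (N - ((j : ℕ) + 1)) (hqhom j)
          rw [hj] at h2
          exact h2
  choose g hgdeg hgrep using hrep
  -- the spanning set: monomials with all exponents ≤ n * N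
  set S : Set (MvPolynomial (Fin n) ℂ) := Set.range
    (fun s : Fin n → Fin (n * N + 1) =>
      MvPolynomial.monomial (Finsupp.equivFunOnFinite.symm fun i => ((s i : ℕ))) (1 : ℂ)) with hS
  set M : Submodule B (MvPolynomial (Fin n) ℂ) := Submodule.span B S with hM
  have hmono : ∀ (s : Fin n →₀ ℕ) (co : ℂ), (∀ i, s i ≤ n * N) →
      MvPolynomial.monomial s co ∈ M := by
    intro s co hs
    have hmem : MvPolynomial.monomial s (1 : ℂ) ∈ S := by
      refine ⟨fun i => ⟨s i, Nat.lt_succ_of_le (hs i)⟩, ?_⟩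
      exact congrArg (fun u => MvPolynomial.monomial u (1 : ℂ))
        (Equiv.symm_apply_apply Finsupp.equivFunOnFinite s)
    have : MvPolynomial.monomial s co
        = (⟨MvPolynomial.C co, B.algebraMap_mem co⟩ : B) • MvPolynomial.monomial s (1 : ℂ) := by
      rw [Subalgebra.smul_def, smul_eq_mul]
      simp [MvPolynomial.C_mul_monomial]
    rw [this]
    exact Submodule.smul_mem _ _ (Submodule.subset_span hmem)
  -- main degree induction
  have main : ∀ d : ℕ, ∀ f : MvPolynomial (Fin n) ℂ, f.totalDegree ≤ d → f ∈ M := by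
    intro d
    induction d using Nat.strong_induction_on with
    | _ d IH =>
      intro f hf
      rw [← MvPolynomial.support_sum_monomial_coeff f]
      refine Submodule.sum_mem _ fun s hs => ?_
      have hco : MvPolynomial.coeff s f ≠ 0 := MvPolynomial.mem_support_iff.1 hs
      have hsd : (s.sum fun _ e => e) ≤ d := le_trans (MvPolynomial.le_totalDegree hs) hf
      by_cases hcase : ∀ i, s i ≤ n * N
      · exact hmono s _ hcase
      · push_neg at hcase
        obtain ⟨i, hi⟩ := hcase
        have hNle : N ≤ n * N := Nat.le_mul_of_pos_left N hn
        have hsiN : N ≤ s i := by omega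
        have hsis : s i ≤ s.sum fun _ e => e := by
          refine Finset.single_le_sum (f := fun j => s j) (fun j _ => Nat.zero_le _) ?_
          rw [Finsupp.mem_support_iff]
          omega
        set t : Fin n →₀ ℕ := s - Finsupp.single i N with ht
        have hts : t + Finsupp.single i N = s := by
          ext j
          simp only [Finsupp.add_apply, Finsupp.coe_tsub, Pi.sub_apply, ht, Finsupp.single_apply]
          split_ifs with hji
          · subst hji; omega
          · omega
        have htsum : (t.sum fun _ e => e) + N = s.sum fun _ e => e := by
          have := congrArg (fun u : Fin n →₀ ℕ => u.sum fun _ e => e) hts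
          simpa [Finsupp.sum_add_index, Finsupp.sum_single_index] using this
        have hmeq : MvPolynomial.monomial s (MvPolynomial.coeff s f)
            = ∑ j, (⟨q j, hqB j⟩ : B) •
              (MvPolynomial.monomial t (MvPolynomial.coeff s f) * g i j) := by
          have h1 : MvPolynomial.monomial s (MvPolynomial.coeff s f)
              = MvPolynomial.monomial t (MvPolynomial.coeff s f) * MvPolynomial.X i ^ N := by
            rw [MvPolynomial.X_pow_eq_monomial, MvPolynomial.monomial_mul, hts, mul_one]
          rw [h1, hgrep i, Finset.mul_sum]
          refine Finset.sum_congr rfl fun j _ => ?_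
          rw [Subalgebra.smul_def, smul_eq_mul]
          ring
        rw [hmeq]
        refine Submodule.sum_mem _ fun j _ => Submodule.smul_mem _ _ ?_
        have hj1 : (j : ℕ) + 1 ≤ n := j.2
        refine IH (d - ((j : ℕ) + 1)) (by omega) _ ?_
        calc (MvPolynomial.monomial t (MvPolynomial.coeff s f) * g i j).totalDegree
            ≤ (MvPolynomial.monomial t (MvPolynomial.coeff s f)).totalDegree
              + (g i j).totalDegree := MvPolynomial.totalDegree_mul _ _
          _ ≤ (t.sum fun _ e => e) + (N - ((j : ℕ) + 1)) := by
              rw [MvPolynomial.totalDegree_monomial _ hco]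
              exact Nat.add_le_add_left (hgdeg i j) _
          _ ≤ d - ((j : ℕ) + 1) := by omega
  -- conclude: module-finite over B, Artin--Tate
  have hfg : (⊤ : Submodule B (MvPolynomial (Fin n) ℂ)).FG := by
    rw [Submodule.fg_def]
    refine ⟨S, Set.finite_range _, ?_⟩
    rw [eq_top_iff]
    exact fun f _ => main f.totalDegree f le_rfl
  have hft : (⊤ : Subalgebra ℂ B).FG :=
    fg_of_fg_of_fg ℂ B (MvPolynomial (Fin n) ℂ)
      (inferInstance : Algebra.FiniteType ℂ (MvPolynomial (Fin n) ℂ)).out hfg Subtype.val_injective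
  exact ⟨⟨hft⟩, inferInstance⟩
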